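/- Persistence of non-degenerate periodic orbits: let P ⊆ ℝ be an open interval, q ≥ 1, ω_0, …, ω_{q−1} : P → ℝ C¹ functions, and f : ℝ → ℝ a C¹ function of period 1. For (x_0, y_0, ε) ∈ ℝ × P × ℝ define recursively x_{k+1} = x_k + ω_k(y_k) and y_{k+1} = y_k + ε f(x_{k+1}) for k = 0, …, q−1. Suppose (x_0*, y_0*) satisfies at ε = 0 (so that y_k = y_0* and x_k* = x_0* + Σ_{j<k} ω_j(y_0*)): (i) Σ_{k=0}^{q−1} ω_k(y_0*) ∈ ℤ, (ii) Σ_{k=0}^{q−1} f(x_k*) = 0, and (iii) the non-degeneracy condition (Σ_{k=0}^{q−1} f'(x_k*)) · (Σ_{k=0}^{q−1} ω_k'(y_0*)) ≠ 0. Then there exist ε_0 > 0 and a neighborhood U of (x_0*, y_0*) such that for every ε with |ε| < ε_0 there is a unique (x_0^ε, y_0^ε) ∈ U whose orbit satisfies x_q − x_0 ∈ ℤ and y_q = y_0, and (x_0^ε, y_0^ε) depends continuously (indeed C¹) on ε with (x_0^0, y_0^0) = (x_0*, y_0*). -/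

import Mathlib

/-!
STATEMENT 17: Persistence of non-degenerate periodic orbits of a perturbed FIEM.
The recursion x_{k+1} = x_k + ω_k(y_k), y_{k+1} = y_k + ε f(x_{k+1}) describes q
iterations along a fixed itinerary.  If at ε = 0 the point (x₀*, y₀*) satisfies
(i) Σ_k ω_k(y₀*) ∈ ℤ, (ii) Σ_k f(x_k*) = 0, and (iii) the non-degeneracy condition
(Σ_k f'(x_k*))·(Σ_k ω_k'(y₀*)) ≠ 0, then for all sufficiently small ε there is a
unique q-periodic point near (x₀*, y₀*), depending C¹ on ε.
(A point is q-periodic when x_q − x₀ ∈ ℤ and y_q = y₀; for ε ≠ 0 the latter is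
equivalent to Σ_{k=1}^{q} f(x_k) = 0, which is the non-degenerate formulation of
the periodicity condition used below.)
-/

noncomputable section

/-- The orbit of the perturbed family of translations:
`x_{k+1} = x_k + ω_k(y_k)`, `y_{k+1} = y_k + ε f(x_{k+1})`. -/
def orbit (ω : ℕ → ℝ → ℝ) (f : ℝ → ℝ) (ε x0 y0 : ℝ) : ℕ → ℝ × ℝ
  | 0 => (x0, y0)
  | k + 1 =>
      let p := orbit ω f ε x0 y0 k
      (p.1 + ω k p.2, p.2 + ε * f (p.1 + ω k p.2))

lemma orbit_succ (ω : ℕ → ℝ → ℝ) (f : ℝ → ℝ) (ε x y : ℝ) (k : ℕ) :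
    orbit ω f ε x y (k+1) = ((orbit ω f ε x y k).1 + ω k (orbit ω f ε x y k).2,
      (orbit ω f ε x y k).2 + ε * f ((orbit ω f ε x y k).1 + ω k (orbit ω f ε x y k).2)) := rfl

lemma orbit_zero_eps (ω : ℕ → ℝ → ℝ) (f : ℝ → ℝ) (x y : ℝ) (k : ℕ) :
    orbit ω f 0 x y k = (x + ∑ j ∈ Finset.range k, ω j y, y) := by
  induction k with
  | zero => simp [orbit]
  | succ k ih => simp [orbit, ih, Finset.sum_range_succ, add_assoc]

def pi1 : (ℝ × ℝ × ℝ) →L[ℝ] ℝ := ContinuousLinearMap.fst ℝ ℝ (ℝ × ℝ)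
def pi2 : (ℝ × ℝ × ℝ) →L[ℝ] ℝ :=
  (ContinuousLinearMap.fst ℝ ℝ ℝ).comp (ContinuousLinearMap.snd ℝ ℝ (ℝ × ℝ))
def pi3 : (ℝ × ℝ × ℝ) →L[ℝ] ℝ :=
  (ContinuousLinearMap.snd ℝ ℝ ℝ).comp (ContinuousLinearMap.snd ℝ ℝ (ℝ × ℝ))

@[simp] lemma pi1_apply (z : ℝ × ℝ × ℝ) : pi1 z = z.1 := rfl
@[simp] lemma pi2_apply (z : ℝ × ℝ × ℝ) : pi2 z = z.2.1 := rfl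
@[simp] lemma pi3_apply (z : ℝ × ℝ × ℝ) : pi3 z = z.2.2 := rfl

set_option maxHeartbeats 2000000 in
lemma orbit_key (P : Set ℝ) (hPopen : IsOpen P) (q : ℕ)
    (ω : ℕ → ℝ → ℝ) (hω : ∀ k < q, ContDiffOn ℝ 1 (ω k) P)
    (f : ℝ → ℝ) (hf : ContDiff ℝ 1 f)
    (x0s y0s : ℝ) (hy0 : y0s ∈ P) (k : ℕ) :
    ∃ Ek Gk : ℝ, k ≤ q →
    ContDiffAt ℝ 1 (fun z : ℝ × ℝ × ℝ => orbit ω f z.1 z.2.1 z.2.2 k)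
      ((0 : ℝ), x0s, y0s) ∧
    HasFDerivAt (fun z : ℝ × ℝ × ℝ => (orbit ω f z.1 z.2.1 z.2.2 k).1)
      (pi2 + (∑ j ∈ Finset.range k, deriv (ω j) y0s) • pi3 + Ek • pi1)
      ((0 : ℝ), x0s, y0s) ∧
    HasFDerivAt (fun z : ℝ × ℝ × ℝ => (orbit ω f z.1 z.2.1 z.2.2 k).2)
      (pi3 + Gk • pi1) ((0 : ℝ), x0s, y0s) := by
  set p0 : ℝ × ℝ × ℝ := ((0 : ℝ), x0s, y0s) with hp0
  induction k with
  | zero =>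
    refine ⟨0, 0, fun _ => ⟨?_, ?_, ?_⟩⟩
    · exact contDiff_snd.contDiffAt
    · have h : pi2 + (∑ j ∈ Finset.range 0, deriv (ω j) y0s) • pi3 + (0 : ℝ) • pi1 = pi2 := by
        ext z <;> simp
      rw [h]; exact pi2.hasFDerivAt
    · have h : pi3 + (0 : ℝ) • pi1 = pi3 := by ext z <;> simp
      rw [h]; exact pi3.hasFDerivAt
  | succ k ih =>
    obtain ⟨Ek, Gk, ihh⟩ := ih
    by_cases hk : k + 1 ≤ q
    · have hkq : k < q := hk
      obtain ⟨hC, hDX, hDY⟩ := ihh (le_of_lt hkq)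
      have hωC : ContDiffAt ℝ 1 (ω k) y0s := (hω k hkq).contDiffAt (hPopen.mem_nhds hy0)
      have hωd : HasDerivAt (ω k) (deriv (ω k) y0s) y0s :=
        (hωC.differentiableAt one_ne_zero).hasDerivAt
      have hYval : (orbit ω f (0:ℝ) x0s y0s k).2 = y0s := by rw [orbit_zero_eps]
      have hXval : (orbit ω f (0:ℝ) x0s y0s k).1 = x0s + ∑ j ∈ Finset.range k, ω j y0s := by
        rw [orbit_zero_eps]
      -- derivative of z ↦ ω k (Y_k z)
      have hωd' : HasDerivAt (ω k)  (deriv (ω k) y0s)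
          ((fun z : ℝ × ℝ × ℝ => (orbit ω f z.1 z.2.1 z.2.2 k).2) p0) := by
        rw [show (fun z : ℝ × ℝ × ℝ => (orbit ω f z.1 z.2.1 z.2.2 k).2) p0 = y0s from hYval]
        exact hωd
      have hωY : HasFDerivAt (fun z : ℝ × ℝ × ℝ => ω k ((orbit ω f z.1 z.2.1 z.2.2 k).2))
          (deriv (ω k) y0s • (pi3 + Gk • pi1)) p0 := hωd'.comp_hasFDerivAt p0 hDY
      have hDX' : HasFDerivAt (fun z : ℝ × ℝ × ℝ =>
            (orbit ω f z.1 z.2.1 z.2.2 k).1 + ω k ((orbit ω f z.1 z.2.1 z.2.2 k).2))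
          ((pi2 + (∑ j ∈ Finset.range k, deriv (ω j) y0s) • pi3 + Ek • pi1)
            + deriv (ω k) y0s • (pi3 + Gk • pi1)) p0 := hDX.add hωY

      have hXv' : (fun z : ℝ × ℝ × ℝ =>
            (orbit ω f z.1 z.2.1 z.2.2 k).1 + ω k ((orbit ω f z.1 z.2.1 z.2.2 k).2)) p0
          = x0s + ∑ j ∈ Finset.range (k+1), ω j y0s := by
        show (orbit ω f (0:ℝ) x0s y0s k).1 + ω k ((orbit ω f (0:ℝ) x0s y0s k).2) = _
        rw [hXval, hYval, Finset.sum_range_succ, add_assoc]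
      have hfd : HasDerivAt f (deriv f (x0s + ∑ j ∈ Finset.range (k+1), ω j y0s))
          ((fun z : ℝ × ℝ × ℝ =>
            (orbit ω f z.1 z.2.1 z.2.2 k).1 + ω k ((orbit ω f z.1 z.2.1 z.2.2 k).2)) p0) := by
        rw [hXv']
        exact ((hf.differentiable one_ne_zero) _).hasDerivAt
      have hfX : HasFDerivAt (fun z : ℝ × ℝ × ℝ =>
            f ((orbit ω f z.1 z.2.1 z.2.2 k).1 + ω k ((orbit ω f z.1 z.2.1 z.2.2 k).2)))
          (deriv f (x0s + ∑ j ∈ Finset.range (k+1), ω j y0s) •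
            ((pi2 + (∑ j ∈ Finset.range k, deriv (ω j) y0s) • pi3 + Ek • pi1)
              + deriv (ω k) y0s • (pi3 + Gk • pi1))) p0 :=
        hfd.comp_hasFDerivAt p0 hDX'
      have hmul : HasFDerivAt (fun z : ℝ × ℝ × ℝ =>
            z.1 * f ((orbit ω f z.1 z.2.1 z.2.2 k).1 + ω k ((orbit ω f z.1 z.2.1 z.2.2 k).2)))
          ((0:ℝ) • (deriv f (x0s + ∑ j ∈ Finset.range (k+1), ω j y0s) •
            ((pi2 + (∑ j ∈ Finset.range k, deriv (ω j) y0s) • pi3 + Ek • pi1)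
              + deriv (ω k) y0s • (pi3 + Gk • pi1)))
            + f (x0s + ∑ j ∈ Finset.range (k+1), ω j y0s) • pi1) p0 := by
        have h := (pi1.hasFDerivAt (x := p0)).mul hfX
        simpa [hXv', hp0, Pi.mul_def, hXval, hYval, Finset.sum_range_succ, add_assoc] using h
      refine ⟨Ek + deriv (ω k) y0s * Gk, Gk + f (x0s + ∑ j ∈ Finset.range (k+1), ω j y0s),
        fun _ => ⟨?_, ?_, ?_⟩⟩
      · -- ContDiffAt of orbit (k+1)
        have hCX : ContDiffAt ℝ 1 (fun z : ℝ × ℝ × ℝ => (orbit ω f z.1 z.2.1 z.2.2 k).1) p0 :=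
          contDiff_fst.contDiffAt.comp p0 hC
        have hCY : ContDiffAt ℝ 1 (fun z : ℝ × ℝ × ℝ => (orbit ω f z.1 z.2.1 z.2.2 k).2) p0 :=
          contDiff_snd.contDiffAt.comp p0 hC
        have hωC' : ContDiffAt ℝ 1 (ω k)
            ((fun z : ℝ × ℝ × ℝ => (orbit ω f z.1 z.2.1 z.2.2 k).2) p0) := by
          rw [show (fun z : ℝ × ℝ × ℝ => (orbit ω f z.1 z.2.1 z.2.2 k).2) p0 = y0s from hYval]
          exact hωC
        have hCX' : ContDiffAt ℝ 1 (fun z : ℝ × ℝ × ℝ =>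
            (orbit ω f z.1 z.2.1 z.2.2 k).1 + ω k ((orbit ω f z.1 z.2.1 z.2.2 k).2)) p0 :=
          hCX.add (hωC'.comp p0 hCY)
        have hCfX : ContDiffAt ℝ 1 (fun z : ℝ × ℝ × ℝ =>
            f ((orbit ω f z.1 z.2.1 z.2.2 k).1 + ω k ((orbit ω f z.1 z.2.1 z.2.2 k).2))) p0 :=
          hf.contDiffAt.comp p0 hCX'
        have hCY' : ContDiffAt ℝ 1 (fun z : ℝ × ℝ × ℝ =>
            (orbit ω f z.1 z.2.1 z.2.2 k).2 + z.1 *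
              f ((orbit ω f z.1 z.2.1 z.2.2 k).1 + ω k ((orbit ω f z.1 z.2.1 z.2.2 k).2))) p0 :=
          hCY.add (contDiff_fst.contDiffAt.mul hCfX)
        simp only [orbit_succ]
        exact hCX'.prodMk hCY'
      · -- X component derivative
        have heq : pi2 + (∑ j ∈ Finset.range (k+1), deriv (ω j) y0s) • pi3
              + (Ek + deriv (ω k) y0s * Gk) • pi1
            = (pi2 + (∑ j ∈ Finset.range k, deriv (ω j) y0s) • pi3 + Ek • pi1)
              + deriv (ω k) y0s • (pi3 + Gk • pi1) := by
          ext <;> simp [Finset.sum_range_succ] <;> ring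
        simp only [orbit_succ]
        rw [heq]
        exact hDX'
      · -- Y component derivative
        have heq : pi3 + (Gk + f (x0s + ∑ j ∈ Finset.range (k+1), ω j y0s)) • pi1
            = (pi3 + Gk • pi1) + ((0:ℝ) • (deriv f (x0s + ∑ j ∈ Finset.range (k+1), ω j y0s) •
            ((pi2 + (∑ j ∈ Finset.range k, deriv (ω j) y0s) • pi3 + Ek • pi1)
              + deriv (ω k) y0s • (pi3 + Gk • pi1)))
            + f (x0s + ∑ j ∈ Finset.range (k+1), ω j y0s) • pi1) := by
          ext <;> simp <;> ring
        simp only [orbit_succ]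
        rw [heq]
        exact hDY.add hmul
    · exact ⟨0, 0, fun h => absurd h hk⟩

lemma orbit_snd_eq (ω : ℕ → ℝ → ℝ) (f : ℝ → ℝ) (ε x y : ℝ) (k : ℕ) :
    (orbit ω f ε x y k).2
      = y + ε * ∑ j ∈ Finset.range k, f ((orbit ω f ε x y (j + 1)).1) := by
  induction k with
  | zero => simp [orbit]
  | succ k ih =>
    rw [Finset.sum_range_succ, mul_add, ← add_assoc, ← ih]
    rfl

lemma f_per_int {f : ℝ → ℝ} (hfper : ∀ x, f (x + 1) = f x) (m : ℤ) (x : ℝ) :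
    f (x + m) = f x := by
  have hper : Function.Periodic f 1 := hfper
  simpa using (hper.int_mul m) x

lemma deriv_per_int {f : ℝ → ℝ} (hfper : ∀ x, f (x + 1) = f x) (m : ℤ) (x : ℝ) :
    deriv f (x + m) = deriv f x := by
  have hd : Function.Periodic (deriv f) 1 := by
    intro y
    have h : (fun z => f (z + 1)) = f := funext hfper
    calc deriv f (y + 1) = deriv (fun z => f (z + 1)) y := (deriv_comp_add_const f 1 y).symm
    _ = deriv f y := by rw [h]
  simpa using (hd.int_mul m) x

/-- shift a sum along the orbit by one, using periodicity -/
lemma sum_shift {g : ℝ → ℝ} {q : ℕ} {x0s : ℝ} {s : ℕ → ℝ} {m : ℤ}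
    (hgper : ∀ n : ℤ, ∀ x, g (x + n) = g x)
    (hs0 : s 0 = 0) (hsq : s q = m) :
    (∑ k ∈ Finset.range q, g (x0s + s (k + 1))) = ∑ k ∈ Finset.range q, g (x0s + s k) := by
  have h0 : ∑ k ∈ Finset.range (q + 1), g (x0s + s k)
      = (∑ k ∈ Finset.range q, g (x0s + s (k + 1))) + g (x0s + s 0) :=
    Finset.sum_range_succ' _ q
  have h1 : ∑ k ∈ Finset.range (q + 1), g (x0s + s k)
      = (∑ k ∈ Finset.range q, g (x0s + s k)) + g (x0s + s q) :=
    Finset.sum_range_succ _ q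
  have h2 : g (x0s + s q) = g (x0s + s 0) := by
    rw [hs0, hsq]; simpa using hgper m x0s
  rw [h2] at h1
  linarith [h0, h1]

/-- `(x₀, y₀) = p` is a q-periodic point of the perturbed map: `x_q − x₀ ∈ ℤ`,
`y_q = y₀`, and (the non-degenerate form of the latter) `Σ_{k=1}^{q} f(x_k) = 0`. -/
def IsPerOrbit (ω : ℕ → ℝ → ℝ) (f : ℝ → ℝ) (q : ℕ) (ε : ℝ) (p : ℝ × ℝ) : Prop :=
  (∃ m : ℤ, (orbit ω f ε p.1 p.2 q).1 - p.1 = (m : ℝ)) ∧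
  (orbit ω f ε p.1 p.2 q).2 = p.2 ∧
  (∑ k ∈ Finset.range q, f ((orbit ω f ε p.1 p.2 (k + 1)).1)) = 0

set_option maxHeartbeats 4000000

theorem persistence_of_nondegenerate_periodic_orbits
    (P : Set ℝ) (hPopen : IsOpen P) (hPconn : P.OrdConnected)
    (q : ℕ) (hq : 1 ≤ q)
    (ω : ℕ → ℝ → ℝ) (hω : ∀ k < q, ContDiffOn ℝ 1 (ω k) P)
    (f : ℝ → ℝ) (hf : ContDiff ℝ 1 f) (hfper : ∀ x, f (x + 1) = f x)
    (x0s y0s : ℝ) (hy0 : y0s ∈ P)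
    -- (i) at ε = 0 the x-coordinate returns mod 1
    (h1 : ∃ m : ℤ, (∑ k ∈ Finset.range q, ω k y0s) = (m : ℝ))
    -- (ii) the sum of f along the unperturbed orbit x_k* = x₀* + Σ_{j<k} ω_j(y₀*) vanishes
    (h2 : (∑ k ∈ Finset.range q,
            f (x0s + ∑ j ∈ Finset.range k, ω j y0s)) = 0)
    -- (iii) non-degeneracy
    (h3 : (∑ k ∈ Finset.range q,
            deriv f (x0s + ∑ j ∈ Finset.range k, ω j y0s)) *
          (∑ k ∈ Finset.range q, deriv (ω k) y0s) ≠ 0) :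
    ∃ ε0 > (0 : ℝ), ∃ U : Set (ℝ × ℝ), IsOpen U ∧ (x0s, y0s) ∈ U ∧
      ∃ φ : ℝ → ℝ × ℝ,
        ContDiffOn ℝ 1 φ (Set.Ioo (-ε0) ε0) ∧
        φ 0 = (x0s, y0s) ∧
        ∀ ε : ℝ, |ε| < ε0 →
          φ ε ∈ U ∧ IsPerOrbit ω f q ε (φ ε) ∧
          ∀ p ∈ U, IsPerOrbit ω f q ε p → p = φ ε := by
  classical
  obtain ⟨m, hm⟩ := h1
  have key := orbit_key P hPopen q ω hω f hf x0s y0s hy0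
  choose Efun Gfun hkey using key
  set p0 : ℝ × ℝ × ℝ := ((0 : ℝ), x0s, y0s) with hp0
  obtain ⟨hCq, hDXq, hDYq⟩ := hkey q le_rfl
  set a : ℝ := ∑ k ∈ Finset.range q, deriv (ω k) y0s with ha_def
  set b : ℝ := ∑ k ∈ Finset.range q,
      deriv f (x0s + ∑ j ∈ Finset.range (k + 1), ω j y0s) with hb_def
  set c : ℝ := ∑ k ∈ Finset.range q,
      deriv f (x0s + ∑ j ∈ Finset.range (k + 1), ω j y0s) *
        (∑ j ∈ Finset.range (k + 1), deriv (ω j) y0s) with hc_def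
  set e : ℝ := ∑ k ∈ Finset.range q,
      deriv f (x0s + ∑ j ∈ Finset.range (k + 1), ω j y0s) * Efun (k + 1) with he_def
  -- the two nondegeneracy factors
  have hshift : b = ∑ k ∈ Finset.range q,
      deriv f (x0s + ∑ j ∈ Finset.range k, ω j y0s) := by
    rw [hb_def]
    exact sum_shift (g := deriv f) (s := fun k => ∑ j ∈ Finset.range k, ω j y0s)
      (fun n x => deriv_per_int hfper n x) (by simp) hm
  obtain ⟨hb1, hane⟩ := mul_ne_zero_iff.1 h3
  have hbne : b ≠ 0 := by rw [hshift]; exact hb1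
  have hOval : ∀ k : ℕ, orbit ω f 0 x0s y0s k
      = (x0s + ∑ j ∈ Finset.range k, ω j y0s, y0s) :=
    fun k => orbit_zero_eps ω f x0s y0s k
  have hS0 : (∑ k ∈ Finset.range q, f ((orbit ω f 0 x0s y0s (k + 1)).1)) = 0 := by
    have hh : ∀ k : ℕ, (orbit ω f 0 x0s y0s (k + 1)).1
        = x0s + ∑ j ∈ Finset.range (k + 1), ω j y0s := fun k => by rw [hOval]
    simp only [hh]
    rw [sum_shift (g := f) (s := fun k => ∑ j ∈ Finset.range k, ω j y0s)
      (fun n x => f_per_int hfper n x) (by simp) hm]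
    exact h2
  set F : ℝ × ℝ × ℝ → ℝ × ℝ × ℝ := fun z =>
    (z.1, (orbit ω f z.1 z.2.1 z.2.2 q).1 - z.2.1,
      ∑ k ∈ Finset.range q, f ((orbit ω f z.1 z.2.1 z.2.2 (k + 1)).1)) with hF_def
  -- smoothness of F at p0
  have hCS : ContDiffAt ℝ 1 (fun z : ℝ × ℝ × ℝ =>
      ∑ k ∈ Finset.range q, f ((orbit ω f z.1 z.2.1 z.2.2 (k + 1)).1)) p0 := by
    apply ContDiffAt.sum
    intro k hk
    have hk' : k + 1 ≤ q := Finset.mem_range.1 hk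
    exact hf.contDiffAt.comp p0 (contDiff_fst.contDiffAt.comp p0 (hkey (k + 1) hk').1)
  have hFC : ContDiffAt ℝ 1 F p0 := by
    refine contDiff_fst.contDiffAt.prodMk (ContDiffAt.prodMk ?_ hCS)
    exact (contDiff_fst.contDiffAt.comp p0 hCq).sub
      (contDiff_fst.comp contDiff_snd).contDiffAt
  -- derivative of F at p0
  have hSd : HasFDerivAt (fun z : ℝ × ℝ × ℝ =>
        ∑ k ∈ Finset.range q, f ((orbit ω f z.1 z.2.1 z.2.2 (k + 1)).1))
      (∑ k ∈ Finset.range q,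
        deriv f (x0s + ∑ j ∈ Finset.range (k + 1), ω j y0s) •
          (pi2 + (∑ j ∈ Finset.range (k + 1), deriv (ω j) y0s) • pi3
            + Efun (k + 1) • pi1)) p0 := by
    apply HasFDerivAt.fun_sum
    intro k hk
    have hk' : k + 1 ≤ q := Finset.mem_range.1 hk
    have hx : (fun z : ℝ × ℝ × ℝ => (orbit ω f z.1 z.2.1 z.2.2 (k + 1)).1) p0
        = x0s + ∑ j ∈ Finset.range (k + 1), ω j y0s := by
      show (orbit ω f 0 x0s y0s (k + 1)).1 = _
      rw [hOval]
    have hfd : HasDerivAt f (deriv f (x0s + ∑ j ∈ Finset.range (k + 1), ω j y0s))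
        ((fun z : ℝ × ℝ × ℝ => (orbit ω f z.1 z.2.1 z.2.2 (k + 1)).1) p0) := by
      rw [hx]; exact ((hf.differentiable one_ne_zero) _).hasDerivAt
    exact hfd.comp_hasFDerivAt p0 (hkey (k + 1) hk').2.1
  have hsum_eq : (∑ k ∈ Finset.range q,
        deriv f (x0s + ∑ j ∈ Finset.range (k + 1), ω j y0s) •
          (pi2 + (∑ j ∈ Finset.range (k + 1), deriv (ω j) y0s) • pi3
            + Efun (k + 1) • pi1))
      = b • pi2 + c • pi3 + e • pi1 := by
    rw [hb_def, hc_def, he_def]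
    ext z <;>
    · simp [ContinuousLinearMap.sum_apply, Finset.sum_mul, mul_add,
        Finset.sum_add_distrib, mul_assoc]
  have hDX2 : HasFDerivAt (fun z : ℝ × ℝ × ℝ =>
        (orbit ω f z.1 z.2.1 z.2.2 q).1 - z.2.1)
      (a • pi3 + Efun q • pi1) p0 := by
    have h := hDXq.sub pi2.hasFDerivAt
    have heq : (pi2 + a • pi3 + Efun q • pi1) - pi2 = a • pi3 + Efun q • pi1 := by
      ext <;> simp
    rw [← heq]
    exact h
  set M : (ℝ × ℝ × ℝ) →L[ℝ] (ℝ × ℝ × ℝ) :=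
    pi1.prod ((a • pi3 + Efun q • pi1).prod (b • pi2 + c • pi3 + e • pi1)) with hM_def
  set N : (ℝ × ℝ × ℝ) →L[ℝ] (ℝ × ℝ × ℝ) :=
    pi1.prod ((b⁻¹ • (pi3 - e • pi1 - c • (a⁻¹ • (pi2 - Efun q • pi1)))).prod
      (a⁻¹ • (pi2 - Efun q • pi1))) with hN_def
  have hNM : Function.LeftInverse N M := by
    intro z
    rw [hM_def, hN_def]
    refine Prod.ext rfl (Prod.ext ?_ ?_) <;> simp <;> field_simp <;> ring
  have hMN : Function.RightInverse N M := by
    intro z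
    rw [hM_def, hN_def]
    refine Prod.ext rfl (Prod.ext ?_ ?_) <;> simp <;> field_simp <;> ring
  set Meq : (ℝ × ℝ × ℝ) ≃L[ℝ] (ℝ × ℝ × ℝ) :=
    ContinuousLinearEquiv.equivOfInverse M N hNM hMN with hMeq_def
  have hFdM : HasFDerivAt F M p0 := by
    rw [hF_def, hM_def]
    exact pi1.hasFDerivAt.prodMk (hDX2.prodMk (hsum_eq ▸ hSd))
  have hFd : HasFDerivAt F ((Meq : (ℝ × ℝ × ℝ) →L[ℝ] (ℝ × ℝ × ℝ))) p0 := hFdM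
  have one_le : (1 : WithTop ℕ∞) ≠ 0 := one_ne_zero
  set Φ := hFC.toOpenPartialHomeomorph F hFd one_le with hPhi_def
  have hcoe : ⇑Φ = F := ContDiffAt.toOpenPartialHomeomorph_coe hFC hFd one_le
  have hsrc : p0 ∈ Φ.source := ContDiffAt.mem_toOpenPartialHomeomorph_source hFC hFd one_le
  have htgt : F p0 ∈ Φ.target :=
    ContDiffAt.image_mem_toOpenPartialHomeomorph_target hFC hFd one_le
  have hinvC : ContDiffAt ℝ 1 (⇑Φ.symm) (F p0) := hFC.to_localInverse hFd one_le
  have hFp0 : F p0 = ((0 : ℝ), (m : ℝ), (0 : ℝ)) := by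
    show ((0 : ℝ), (orbit ω f 0 x0s y0s q).1 - x0s,
      ∑ k ∈ Finset.range q, f ((orbit ω f 0 x0s y0s (k + 1)).1)) = _
    rw [hOval q, hS0]
    simp [hm]
  obtain ⟨N0, hN0, hN0C⟩ := hinvC.contDiffOn le_rfl (by simp)
  have hw0N1 : F p0 ∈ interior N0 := mem_interior_iff_mem_nhds.2 hN0
  have hs12 : IsOpen {w : ℝ × ℝ × ℝ | |w.2.1 - (m : ℝ)| < 1 / 2} := by
    have hcont : Continuous fun w : ℝ × ℝ × ℝ => |w.2.1 - (m : ℝ)| :=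
      ((continuous_fst.comp continuous_snd).sub continuous_const).abs
    exact isOpen_lt hcont continuous_const
  have hVopen : IsOpen (Φ.source ∩ Φ ⁻¹' {w : ℝ × ℝ × ℝ | |w.2.1 - (m : ℝ)| < 1 / 2}) :=
    Φ.isOpen_inter_preimage hs12
  have hp0V : p0 ∈ Φ.source ∩ Φ ⁻¹' {w : ℝ × ℝ × ℝ | |w.2.1 - (m : ℝ)| < 1 / 2} := by
    refine ⟨hsrc, ?_⟩
    show Φ p0 ∈ {w : ℝ × ℝ × ℝ | |w.2.1 - (m : ℝ)| < 1 / 2}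
    rw [hcoe, hFp0]
    simp
  have hVnhds : Φ.source ∩ Φ ⁻¹' {w : ℝ × ℝ × ℝ | |w.2.1 - (m : ℝ)| < 1 / 2}
      ∈ nhds (((0 : ℝ), x0s, y0s) : ℝ × ℝ × ℝ) := hVopen.mem_nhds hp0V
  obtain ⟨u, hu, v, hv, huv⟩ := mem_nhds_prod_iff.1 hVnhds
  obtain ⟨δ, hδpos, hδu⟩ := Metric.mem_nhds_iff.1 hu
  obtain ⟨U, hUv, hUopen, hUmem⟩ := mem_nhds_iff.1 hv
  have hball : Metric.ball (0 : ℝ) δ = Set.Ioo (-δ) δ := by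
    rw [Real.ball_eq_Ioo]; norm_num
  have hprod : Set.Ioo (-δ) δ ×ˢ U ⊆
      Φ.source ∩ Φ ⁻¹' {w : ℝ × ℝ × ℝ | |w.2.1 - (m : ℝ)| < 1 / 2} := by
    intro w hw
    exact huv ⟨hδu (by rw [hball]; exact hw.1), hUv hw.2⟩
  set W := Set.Ioo (-δ) δ ×ˢ U with hW_def
  have hWopen : IsOpen W := isOpen_Ioo.prod hUopen
  have hTopen : IsOpen ((Φ.target ∩ Φ.symm ⁻¹' W) ∩ interior N0) :=
    (Φ.isOpen_inter_preimage_symm hWopen).inter isOpen_interior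
  have hw0T : F p0 ∈ (Φ.target ∩ Φ.symm ⁻¹' W) ∩ interior N0 := by
    refine ⟨⟨htgt, ?_⟩, hw0N1⟩
    show Φ.symm (F p0) ∈ W
    have hsymm0 : Φ.symm (F p0) = p0 := by rw [← hcoe]; exact Φ.left_inv hsrc
    rw [hsymm0]
    refine ⟨⟨?_, ?_⟩, ?_⟩
    · simp only [hp0]; linarith
    · simp only [hp0]; exact hδpos
    · simp only [hp0]; exact hUmem
  have hg : Continuous (fun t : ℝ => ((t, (m : ℝ), (0 : ℝ)) : ℝ × ℝ × ℝ)) :=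
    continuous_id.prodMk continuous_const
  have hTn : (fun t : ℝ => ((t, (m : ℝ), (0 : ℝ)) : ℝ × ℝ × ℝ)) ⁻¹'
      ((Φ.target ∩ Φ.symm ⁻¹' W) ∩ interior N0) ∈ nhds (0 : ℝ) := by
    apply (hTopen.preimage hg).mem_nhds
    have hmem0 : ((0 : ℝ), (m : ℝ), (0 : ℝ)) ∈ (Φ.target ∩ Φ.symm ⁻¹' W) ∩ interior N0 := by
      rw [← hFp0]; exact hw0T
    exact hmem0
  obtain ⟨ε1, hε1pos, hε1⟩ := Metric.mem_nhds_iff.1 hTn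
  have hε0pos : (0 : ℝ) < min δ ε1 := lt_min hδpos hε1pos
  have hmain : ∀ ε : ℝ, |ε| < min δ ε1 →
      ((ε, (m : ℝ), (0 : ℝ)) : ℝ × ℝ × ℝ) ∈ (Φ.target ∩ Φ.symm ⁻¹' W) ∩ interior N0 := by
    intro ε hε
    have hball1 : ε ∈ Metric.ball (0 : ℝ) ε1 := by
      simpa [Real.dist_eq] using lt_of_lt_of_le hε (min_le_right δ ε1)
    exact hε1 hball1
  have hfacts : ∀ ε : ℝ, |ε| < min δ ε1 →
      Φ.symm ((ε, (m : ℝ), (0 : ℝ)) : ℝ × ℝ × ℝ) ∈ W ∧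
      Φ.symm ((ε, (m : ℝ), (0 : ℝ)) : ℝ × ℝ × ℝ) ∈ Φ.source ∧
      F (Φ.symm ((ε, (m : ℝ), (0 : ℝ)) : ℝ × ℝ × ℝ)) = (ε, (m : ℝ), (0 : ℝ)) := by
    intro ε hε
    obtain ⟨⟨ht, hsymW⟩, _⟩ := hmain ε hε
    exact ⟨hsymW, Φ.map_target ht, by rw [← hcoe]; exact Φ.right_inv ht⟩
  refine ⟨min δ ε1, hε0pos, U, hUopen, hUmem,
    fun t => (Φ.symm ((t, (m : ℝ), (0 : ℝ)) : ℝ × ℝ × ℝ)).2, ?_, ?_, ?_⟩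
  · -- C¹ dependence
    have hmaps : ∀ t ∈ Set.Ioo (-(min δ ε1)) (min δ ε1),
        ((t, (m : ℝ), (0 : ℝ)) : ℝ × ℝ × ℝ) ∈ interior N0 := by
      intro t ht
      exact (hmain t (abs_lt.2 ⟨ht.1, ht.2⟩)).2
    have hgC : ContDiffOn ℝ 1 (fun t : ℝ => ((t, (m : ℝ), (0 : ℝ)) : ℝ × ℝ × ℝ))
        (Set.Ioo (-(min δ ε1)) (min δ ε1)) :=
      (contDiff_id.prodMk contDiff_const).contDiffOn
    have hsymC : ContDiffOn ℝ 1 (⇑Φ.symm) (interior N0) := hN0C.mono interior_subset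
    exact contDiff_snd.comp_contDiffOn (hsymC.comp hgC hmaps)
  · -- value at 0
    have hsymm0 : Φ.symm (F p0) = p0 := by rw [← hcoe]; exact Φ.left_inv hsrc
    show (Φ.symm (((0 : ℝ), (m : ℝ), (0 : ℝ)) : ℝ × ℝ × ℝ)).2 = (x0s, y0s)
    rw [← hFp0, hsymm0]
  · -- periodic orbits
    intro ε hε
    beta_reduce
    obtain ⟨hzW, hzsrc, hzF⟩ := hfacts ε hε
    set z := Φ.symm ((ε, (m : ℝ), (0 : ℝ)) : ℝ × ℝ × ℝ) with hz_def
    have hz1 : z.1 = ε := congrArg Prod.fst hzF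
    have hx_eq : (orbit ω f z.1 z.2.1 z.2.2 q).1 - z.2.1 = (m : ℝ) :=
      congrArg (fun w : ℝ × ℝ × ℝ => w.2.1) hzF
    have hs_eq : (∑ k ∈ Finset.range q, f ((orbit ω f z.1 z.2.1 z.2.2 (k + 1)).1)) = 0 :=
      congrArg (fun w : ℝ × ℝ × ℝ => w.2.2) hzF
    rw [hz1] at hx_eq hs_eq
    refine ⟨hzW.2, ⟨⟨m, hx_eq⟩, ?_, hs_eq⟩, ?_⟩
    · rw [orbit_snd_eq ω f ε z.2.1 z.2.2 q, hs_eq, mul_zero, add_zero]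
    · -- uniqueness
      intro p hpU hper
      obtain ⟨⟨m', hm'⟩, hyper, hsum⟩ := hper
      have hin : ((ε, p.1, p.2) : ℝ × ℝ × ℝ) ∈ Set.Ioo (-δ) δ ×ˢ U := by
        have habs := abs_lt.1 hε
        have hle := min_le_left δ ε1
        refine ⟨⟨by linarith, by linarith⟩, by simpa using hpU⟩
      have hVin := hprod hin
      have hpsrc : ((ε, p.1, p.2) : ℝ × ℝ × ℝ) ∈ Φ.source := hVin.1
      have hFp : |(F ((ε, p.1, p.2) : ℝ × ℝ × ℝ)).2.1 - (m : ℝ)| < 1 / 2 := by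
        have hmem := hVin.2
        rw [Set.mem_preimage, hcoe] at hmem
        exact hmem
      have hFval : (F ((ε, p.1, p.2) : ℝ × ℝ × ℝ)).2.1 = (m' : ℝ) := hm'
      have hmm : m' = m := by
        rw [hFval] at hFp
        by_contra hne
        have hsub : m' - m ≠ 0 := sub_ne_zero.2 hne
        have h1' : (1 : ℝ) ≤ |((m' - m : ℤ) : ℝ)| := by
          exact_mod_cast Int.one_le_abs hsub
        have h2' : |((m' - m : ℤ) : ℝ)| = |(m' : ℝ) - (m : ℝ)| := by push_cast; ring_nf
        rw [h2'] at h1'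
        linarith
      have hFeq : F ((ε, p.1, p.2) : ℝ × ℝ × ℝ) = ((ε, (m : ℝ), (0 : ℝ)) : ℝ × ℝ × ℝ) := by
        show ((ε, (orbit ω f ε p.1 p.2 q).1 - p.1,
          ∑ k ∈ Finset.range q, f ((orbit ω f ε p.1 p.2 (k + 1)).1)) : ℝ × ℝ × ℝ) = _
        rw [hm', hsum, hmm]
      have hzz : ((ε, p.1, p.2) : ℝ × ℝ × ℝ) = z := by
        apply Φ.injOn hpsrc hzsrc
        rw [hcoe, hFeq, hzF]
      have hsnd := congrArg Prod.snd hzz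
      simpa using hsnd

end
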